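/- There exists an absolute constant A > 0 such that the following holds: for every integer K ≥ 1, every integer j with 0 ≤ j ≤ K, every real w with 0 < w ≤ 1, and every real b with 0 < b ≤ 1 and 1 ≤ 2bK, one has | Ĩ_{C₉}(K,j;w,b) − Ĩ_{C₇}(K,j;w,b) | ≤ A · e^{−K}. -/

import Mathlib

open MeasureTheory Set Filter Topology

/-- `Ĩ_{C₉}(K,j;w,b) = K^{-j} ∫_0^∞ t^j exp(−2πwt − 2πib t²) dt`. -/
noncomputable def ItC9 (K j : ℕ) (w b : ℝ) : ℂ :=
  ((K : ℂ) ^ j)⁻¹ * ∫ t in Set.Ioi (0 : ℝ), (t : ℂ) ^ j *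
    Complex.exp (-2 * (Real.pi : ℂ) * (w : ℂ) * (t : ℂ) -
      2 * (Real.pi : ℂ) * Complex.I * (b : ℂ) * (t : ℂ) ^ 2)

/-- `Ĩ_{C₇}(K,j;w,b)`: the contour integral of `z^j exp(−2πwz − 2πib z²)` along
the segment from `0` to `K−iK` at angle `−π/4`. -/
noncomputable def ItC7 (K j : ℕ) (w b : ℝ) : ℂ :=
  ((K : ℂ) ^ j)⁻¹ * Complex.exp (-(Complex.I) * (Real.pi : ℂ) * ((j : ℂ) + 1) / 4) *
    ∫ t in (0 : ℝ)..(Real.sqrt 2 * K), (t : ℂ) ^ j *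
      Complex.exp (-2 * (Real.pi : ℂ) * (w : ℂ) *
          Complex.exp (-(Complex.I) * (Real.pi : ℂ) / 4) * (t : ℂ) -
        2 * (Real.pi : ℂ) * (b : ℂ) * (t : ℂ) ^ 2)

noncomputable def FF (j : ℕ) (w b : ℝ) (z : ℂ) : ℂ :=
  z ^ j * Complex.exp (-2 * (Real.pi : ℂ) * (w : ℂ) * z -
      2 * (Real.pi : ℂ) * Complex.I * (b : ℂ) * z ^ 2)

noncomputable def gg (j : ℕ) (w b θ t : ℝ) : ℂ :=
  Complex.exp (θ * Complex.I) * FF j w b (Complex.exp (θ * Complex.I) * t)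

lemma norm_gg (j : ℕ) (w b θ t : ℝ) (ht : 0 ≤ t) :
    ‖gg j w b θ t‖ = t ^ j *
      Real.exp (2*Real.pi*b*t^2*Real.sin (2*θ) - 2*Real.pi*w*t*Real.cos θ) := by
  have h1 : ‖Complex.exp ((θ:ℂ) * Complex.I)‖ = 1 := by
    simp [Complex.norm_exp]
  have hre : (-2 * (Real.pi : ℂ) * (w : ℂ) * (Complex.exp ((θ:ℂ) * Complex.I) * t) -
      2 * (Real.pi : ℂ) * Complex.I * (b : ℂ) * (Complex.exp ((θ:ℂ) * Complex.I) * t) ^ 2).re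
      = 2*Real.pi*b*t^2*Real.sin (2*θ) - 2*Real.pi*w*t*Real.cos θ := by
    rw [Complex.exp_mul_I]
    simp only [pow_two, Complex.mul_re, Complex.mul_im, Complex.add_re, Complex.add_im,
      Complex.sub_re, Complex.sub_im, Complex.I_re, Complex.I_im, Complex.ofReal_re,
      Complex.ofReal_im, Complex.neg_re, Complex.neg_im, Complex.cos_ofReal_re,
      Complex.sin_ofReal_re, Complex.cos_ofReal_im, Complex.sin_ofReal_im,
      Complex.re_ofNat, Complex.im_ofNat, Real.sin_two_mul]
    ring
  have h2 : ‖Complex.exp ((θ:ℂ) * Complex.I)‖ = 1 := by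
    simpa using h1
  rw [gg, FF]
  simp only [norm_mul, norm_pow, h2, one_mul,
    Complex.norm_exp, hre, Complex.norm_real, Real.norm_eq_abs, abs_of_nonneg ht]

lemma cont_gg (j : ℕ) (w b θ : ℝ) : Continuous (gg j w b θ) := by
  unfold gg FF; fun_prop

lemma diff_GG (j : ℕ) (w b : ℝ) :
    Differentiable ℂ (fun s => Complex.exp s * FF j w b (Complex.exp s)) := by
  unfold FF; fun_prop

lemma integrableOn_pow_exp (n : ℕ) {c : ℝ} (hc : 0 < c) :
    IntegrableOn (fun t : ℝ => t ^ n * Real.exp (-c * t)) (Ioi 0) := by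
  have := integrableOn_rpow_mul_exp_neg_mul_rpow (s := (n:ℝ)) (p := 1)
    (lt_of_lt_of_le (by norm_num) (Nat.cast_nonneg n)) one_pos hc
  refine this.congr_fun (fun t ht => ?_) measurableSet_Ioi
  beta_reduce
  rw [Real.rpow_natCast, Real.rpow_one]

lemma norm_gg_le (j : ℕ) (w b : ℝ) (hw : 0 ≤ w) (hb : 0 ≤ b) {θ : ℝ}
    (hθ₁ : -(Real.pi/4) ≤ θ) (hθ₂ : θ ≤ 0) {t : ℝ} (ht : 0 ≤ t) :
    ‖gg j w b θ t‖ ≤ t ^ j * Real.exp (-(Real.sqrt 2 * Real.pi * w) * t) := by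
  rw [norm_gg j w b θ t ht]
  have hπ := Real.pi_pos
  refine mul_le_mul_of_nonneg_left (Real.exp_le_exp.2 ?_) (pow_nonneg ht j)
  have hsin : Real.sin (2*θ) ≤ 0 := by
    apply Real.sin_nonpos_of_nonpos_of_neg_pi_le <;> linarith
  have hcos : Real.sqrt 2 / 2 ≤ Real.cos θ := by
    rw [← Real.cos_pi_div_four, ← Real.cos_neg θ]
    apply Real.cos_le_cos_of_nonneg_of_le_pi <;> linarith
  have h1 : 2*Real.pi*b*t^2*Real.sin (2*θ) ≤ 0 :=
    mul_nonpos_of_nonneg_of_nonpos (by positivity) hsin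
  have h2 : Real.sqrt 2*Real.pi*w*t ≤ 2*Real.pi*w*t*Real.cos θ := by
    have h3 : 0 ≤ 2*Real.pi*w*t := by positivity
    nlinarith [mul_le_mul_of_nonneg_left hcos h3]
  linarith

lemma integrableOn_gg (j : ℕ) (w b : ℝ) (hw : 0 < w) (hb : 0 ≤ b) {θ : ℝ}
    (hθ₁ : -(Real.pi/4) ≤ θ) (hθ₂ : θ ≤ 0) {s : ℝ} (hs : 0 ≤ s) :
    IntegrableOn (gg j w b θ) (Ioi s) := by
  have hc : 0 < Real.sqrt 2 * Real.pi * w := by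
    have := Real.pi_pos
    have : (0:ℝ) < Real.sqrt 2 := by positivity
    positivity
  have hint : IntegrableOn (fun t : ℝ => t ^ j *
      Real.exp (-(Real.sqrt 2 * Real.pi * w) * t)) (Ioi s) :=
    (integrableOn_pow_exp j hc).mono_set (Ioi_subset_Ioi hs)
  refine Integrable.mono hint ((cont_gg j w b θ).aestronglyMeasurable.restrict) ?_
  filter_upwards [ae_restrict_mem measurableSet_Ioi] with t ht
  have ht0 : (0:ℝ) ≤ t := le_of_lt (lt_of_le_of_lt hs ht)
  rw [Real.norm_of_nonneg (by positivity)]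
  exact norm_gg_le j w b hw.le hb hθ₁ hθ₂ ht0

noncomputable def VV (j : ℕ) (w b x : ℝ) : ℂ :=
  ∫ y in (-(Real.pi/4))..0, Complex.exp ((x:ℂ) + y * Complex.I) *
    FF j w b (Complex.exp ((x:ℂ) + y * Complex.I))

lemma norm_VV_le (j : ℕ) (w b : ℝ) (hw : 0 ≤ w) (hb : 0 ≤ b) (x : ℝ) :
    ‖VV j w b x‖ ≤ Real.pi/4 * (Real.exp x ^ (j+1) *
      Real.exp (-(Real.sqrt 2 * Real.pi * w) * Real.exp x)) := by
  have hπ := Real.pi_pos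
  have key : ∀ y ∈ Set.uIoc (-(Real.pi/4)) (0:ℝ),
      ‖Complex.exp ((x:ℂ) + y * Complex.I) * FF j w b (Complex.exp ((x:ℂ) + y * Complex.I))‖
        ≤ Real.exp x ^ (j+1) * Real.exp (-(Real.sqrt 2 * Real.pi * w) * Real.exp x) := by
    intro y hy
    rw [Set.uIoc_of_le (by linarith)] at hy
    have h1 : Complex.exp ((x:ℂ) + y * Complex.I)
        = Complex.exp ((y:ℂ) * Complex.I) * (Real.exp x : ℂ) := by
      rw [Complex.exp_add, mul_comm, Complex.ofReal_exp]
    have hb2 := norm_gg_le j w b hw hb (le_of_lt hy.1) hy.2 (Real.exp_nonneg x)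
    rw [gg] at hb2
    rw [h1]
    calc ‖Complex.exp ((y:ℂ) * Complex.I) * (Real.exp x : ℂ) *
          FF j w b (Complex.exp ((y:ℂ) * Complex.I) * (Real.exp x : ℂ))‖
        = Real.exp x * ‖Complex.exp ((y:ℂ) * Complex.I) *
            FF j w b (Complex.exp ((y:ℂ) * Complex.I) * (Real.exp x : ℂ))‖ := by
          rw [mul_right_comm, norm_mul, norm_mul]
          simp [Complex.norm_real, Real.abs_exp, mul_comm, mul_assoc, mul_left_comm]
      _ ≤ Real.exp x * (Real.exp x ^ j *
            Real.exp (-(Real.sqrt 2 * Real.pi * w) * Real.exp x)) :=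
          mul_le_mul_of_nonneg_left hb2 (Real.exp_nonneg x)
      _ = Real.exp x ^ (j+1) * Real.exp (-(Real.sqrt 2 * Real.pi * w) * Real.exp x) := by
          rw [pow_succ]; ring
  have h2 := intervalIntegral.norm_integral_le_of_norm_le_const key
  rw [VV] at *
  refine le_trans h2 (le_of_eq ?_)
  rw [show |(0:ℝ) - -(Real.pi/4)| = Real.pi/4 by rw [abs_of_nonneg] <;> linarith]
  ring

lemma tendsto_VV_atBot (j : ℕ) (w b : ℝ) (hw : 0 ≤ w) (hb : 0 ≤ b) :
    Tendsto (VV j w b) atBot (𝓝 0) := by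
  apply squeeze_zero_norm (a := fun x => Real.pi/4 * Real.exp (((j:ℝ)+1) * x))
  · intro x
    refine le_trans (norm_VV_le j w b hw hb x) ?_
    have h1 : Real.exp (-(Real.sqrt 2 * Real.pi * w) * Real.exp x) ≤ 1 := by
      apply Real.exp_le_one_iff.2
      have h2 : 0 ≤ Real.sqrt 2 * Real.pi * w := by positivity
      have := Real.exp_nonneg x
      nlinarith
    have h3 : Real.exp x ^ (j+1) = Real.exp (((j:ℝ)+1) * x) := by
      rw [← Real.exp_nat_mul]; push_cast; ring_nf
    rw [← h3]
    have h4 : (0:ℝ) ≤ Real.exp x ^ (j+1) := by positivity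
    nlinarith [Real.pi_pos, mul_le_mul_of_nonneg_left h1 h4]
  · rw [show (0:ℝ) = Real.pi/4 * 0 by ring]
    apply Tendsto.const_mul
    have h5 : Tendsto (fun x : ℝ => ((j:ℝ)+1)*x) atBot atBot :=
      tendsto_id.const_mul_atBot (by positivity)
    exact Real.tendsto_exp_atBot.comp h5

lemma tendsto_VV_atTop (j : ℕ) (w b : ℝ) (hw : 0 < w) (hb : 0 ≤ b) :
    Tendsto (VV j w b) atTop (𝓝 0) := by
  have hc : 0 < Real.sqrt 2 * Real.pi * w := by
    have := Real.pi_pos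
    have h2 : (0:ℝ) < Real.sqrt 2 := by positivity
    positivity
  apply squeeze_zero_norm (a := fun x => Real.pi/4 * (Real.exp x ^ (j+1) *
      Real.exp (-(Real.sqrt 2 * Real.pi * w) * Real.exp x)))
  · exact norm_VV_le j w b hw.le hb
  · rw [show (0:ℝ) = Real.pi/4 * 0 by ring]
    apply Tendsto.const_mul
    have h1 := (tendsto_rpow_mul_exp_neg_mul_atTop_nhds_zero ((j:ℝ)+1)
      (Real.sqrt 2 * Real.pi * w) hc).comp Real.tendsto_exp_atTop
    refine h1.congr (fun x => ?_)
    simp only [Function.comp_apply]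
    rw [show ((j:ℝ)+1) = ((j+1 : ℕ) : ℝ) by push_cast; ring, Real.rpow_natCast]

lemma horiz (j : ℕ) (w b θ x₀ x₁ : ℝ) :
    (∫ x : ℝ in x₀..x₁, Complex.exp ((x:ℂ) + (θ:ℂ) * Complex.I) *
      FF j w b (Complex.exp ((x:ℂ) + (θ:ℂ) * Complex.I)))
      = ∫ t in Real.exp x₀..Real.exp x₁, gg j w b θ t := by
  rw [← intervalIntegral.integral_comp_smul_deriv
    (f := Real.exp) (f' := Real.exp) (g := gg j w b θ)
    (fun x _ => Real.hasDerivAt_exp x) Real.continuous_exp.continuousOn (cont_gg j w b θ)]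
  refine intervalIntegral.integral_congr (fun x _ => ?_)
  have harg : Complex.exp ((x:ℂ) + (θ:ℂ) * Complex.I)
      = Complex.exp ((θ:ℂ) * Complex.I) * (Real.exp x : ℂ) := by
    rw [Complex.exp_add, Complex.ofReal_exp, mul_comm]
  rw [harg]
  show _ = Real.exp x • gg j w b θ (Real.exp x)
  rw [gg, Complex.real_smul]
  ring

lemma rect (j : ℕ) (w b x₀ x₁ : ℝ) :
    (∫ t in Real.exp x₀..Real.exp x₁, gg j w b (-(Real.pi/4)) t)
      - (∫ t in Real.exp x₀..Real.exp x₁, gg j w b 0 t)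
      = Complex.I • VV j w b x₀ - Complex.I • VV j w b x₁ := by
  have H := Complex.integral_boundary_rect_eq_zero_of_differentiableOn
    (fun s => Complex.exp s * FF j w b (Complex.exp s))
    (Complex.mk x₀ (-(Real.pi/4))) (Complex.mk x₁ 0)
    ((diff_GG j w b).differentiableOn)
  dsimp only at H
  have h1 : (∫ x : ℝ in x₀..x₁, Complex.exp ((x:ℂ) + ((-(Real.pi/4):ℝ):ℂ) * Complex.I) *
      FF j w b (Complex.exp ((x:ℂ) + ((-(Real.pi/4):ℝ):ℂ) * Complex.I)))
      = ∫ t in Real.exp x₀..Real.exp x₁, gg j w b (-(Real.pi/4)) t := horiz j w b _ x₀ x₁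
  have h0 : (∫ x : ℝ in x₀..x₁, Complex.exp ((x:ℂ) + ((0:ℝ):ℂ) * Complex.I) *
      FF j w b (Complex.exp ((x:ℂ) + ((0:ℝ):ℂ) * Complex.I)))
      = ∫ t in Real.exp x₀..Real.exp x₁, gg j w b 0 t := horiz j w b 0 x₀ x₁
  push_cast at h1 h0 H
  rw [VV, VV]
  push_cast
  linear_combination H - h1 + h0

lemma norm_gg_le_one (j : ℕ) (w b : ℝ) (hw : 0 ≤ w) (hb : 0 ≤ b) {θ : ℝ}
    (hθ₁ : -(Real.pi/4) ≤ θ) (hθ₂ : θ ≤ 0) {t : ℝ} (ht : 0 ≤ t) (ht1 : t ≤ 1) :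
    ‖gg j w b θ t‖ ≤ 1 := by
  refine le_trans (norm_gg_le j w b hw hb hθ₁ hθ₂ ht) ?_
  have h1 : Real.exp (-(Real.sqrt 2 * Real.pi * w) * t) ≤ 1 := by
    apply Real.exp_le_one_iff.2
    have h2 : 0 ≤ Real.sqrt 2 * Real.pi * w := by positivity
    nlinarith
  have h2 : t ^ j ≤ 1 := pow_le_one₀ ht ht1
  nlinarith [pow_nonneg ht j, Real.exp_nonneg (-(Real.sqrt 2 * Real.pi * w) * t)]

lemma split_Ioi (j : ℕ) (w b : ℝ) (hw : 0 < w) (hb : 0 ≤ b) {θ : ℝ}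
    (hθ₁ : -(Real.pi/4) ≤ θ) (hθ₂ : θ ≤ 0) {a : ℝ} (ha : 0 ≤ a) :
    (∫ t in Ioi (0:ℝ), gg j w b θ t)
      = (∫ t in Ioc (0:ℝ) a, gg j w b θ t) + ∫ t in Ioi a, gg j w b θ t := by
  rw [← Ioc_union_Ioi_eq_Ioi ha]
  exact setIntegral_union Ioc_disjoint_Ioi_same measurableSet_Ioi
    ((integrableOn_gg j w b hw hb hθ₁ hθ₂ le_rfl).mono_set Ioc_subset_Ioi_self)
    (integrableOn_gg j w b hw hb hθ₁ hθ₂ ha)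

lemma tendsto_tail (j : ℕ) (w b : ℝ) (hw : 0 < w) (hb : 0 ≤ b) {θ : ℝ}
    (hθ₁ : -(Real.pi/4) ≤ θ) (hθ₂ : θ ≤ 0) :
    Tendsto (fun x₀ => ∫ t in Ioc (0:ℝ) (Real.exp x₀), gg j w b θ t) atBot (𝓝 0) := by
  apply squeeze_zero_norm' (a := Real.exp)
  · filter_upwards [eventually_le_atBot (0:ℝ)] with x₀ hx₀
    have hexp1 : Real.exp x₀ ≤ 1 := Real.exp_le_one_iff.2 hx₀
    have := norm_setIntegral_le_of_norm_le_const (C := 1)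
      (s := Ioc (0:ℝ) (Real.exp x₀)) (f := gg j w b θ) (μ := volume)
      (by rw [Real.volume_Ioc]; exact ENNReal.ofReal_lt_top)
      (fun t htm => norm_gg_le_one j w b hw.le hb hθ₁ hθ₂ htm.1.le (le_trans htm.2 hexp1))
    refine le_trans this ?_
    rw [measureReal_def, Real.volume_Ioc, one_mul, ENNReal.toReal_ofReal (by simpa using (Real.exp_pos x₀).le)]
    simp
  · exact Real.tendsto_exp_atBot

lemma rot (j : ℕ) (w b : ℝ) (hw : 0 < w) (hb : 0 ≤ b) :
    (∫ t in Ioi (0:ℝ), gg j w b 0 t) = ∫ t in Ioi (0:ℝ), gg j w b (-(Real.pi/4)) t := by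
  have hπ := Real.pi_pos
  have hθ4a : -(Real.pi/4) ≤ -(Real.pi/4) := le_rfl
  have hθ4b : -(Real.pi/4) ≤ (0:ℝ) := by linarith
  have int4 := integrableOn_gg j w b hw hb hθ4a hθ4b (le_refl 0)
  have int0 := integrableOn_gg j w b hw hb hθ4b le_rfl (le_refl 0)
  -- Step A : for every x₀, tail difference = I • VV x₀
  have stepA : ∀ x₀ : ℝ, (∫ t in Ioi (Real.exp x₀), gg j w b (-(Real.pi/4)) t)
      - (∫ t in Ioi (Real.exp x₀), gg j w b 0 t) = Complex.I • VV j w b x₀ := by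
    intro x₀
    have ha := intervalIntegral_tendsto_integral_Ioi (Real.exp x₀)
      (int4.mono_set (Ioi_subset_Ioi (Real.exp_pos x₀).le)) Real.tendsto_exp_atTop
    have hb0 := intervalIntegral_tendsto_integral_Ioi (Real.exp x₀)
      (int0.mono_set (Ioi_subset_Ioi (Real.exp_pos x₀).le)) Real.tendsto_exp_atTop
    have h1 : Tendsto (fun x₁ => (∫ t in Real.exp x₀..Real.exp x₁, gg j w b (-(Real.pi/4)) t)
        - ∫ t in Real.exp x₀..Real.exp x₁, gg j w b 0 t) atTop
        (𝓝 ((∫ t in Ioi (Real.exp x₀), gg j w b (-(Real.pi/4)) t)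
          - ∫ t in Ioi (Real.exp x₀), gg j w b 0 t)) := ha.sub hb0
    have h2 : Tendsto (fun x₁ => Complex.I • VV j w b x₀ - Complex.I • VV j w b x₁) atTop
        (𝓝 (Complex.I • VV j w b x₀ - Complex.I • (0:ℂ))) :=
      tendsto_const_nhds.sub ((tendsto_VV_atTop j w b hw hb).const_smul Complex.I)
    rw [smul_zero, sub_zero] at h2
    exact tendsto_nhds_unique h1 (h2.congr (fun x₁ => (rect j w b x₀ x₁).symm))
  -- Step B : limit x₀ → -∞
  have hT4 := tendsto_tail j w b hw hb hθ4a hθ4b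
  have hT0 := tendsto_tail j w b hw hb hθ4b le_rfl
  have hV := (tendsto_VV_atBot j w b hw.le hb).const_smul Complex.I
  rw [show (Complex.I • (0:ℂ)) = 0 from smul_zero _] at hV
  have key : Tendsto (fun x₀ : ℝ => Complex.I • VV j w b x₀) atBot
      (𝓝 ((∫ t in Ioi (0:ℝ), gg j w b (-(Real.pi/4)) t) - ∫ t in Ioi (0:ℝ), gg j w b 0 t)) := by
    have heq : ∀ x₀ : ℝ, Complex.I • VV j w b x₀
        = ((∫ t in Ioi (0:ℝ), gg j w b (-(Real.pi/4)) t)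
            - ∫ t in Ioc (0:ℝ) (Real.exp x₀), gg j w b (-(Real.pi/4)) t)
          - ((∫ t in Ioi (0:ℝ), gg j w b 0 t)
            - ∫ t in Ioc (0:ℝ) (Real.exp x₀), gg j w b 0 t) := by
      intro x₀
      rw [← stepA x₀]
      have e4 := split_Ioi j w b hw hb hθ4a hθ4b (Real.exp_pos x₀).le
      have e0 := split_Ioi j w b hw hb hθ4b le_rfl (Real.exp_pos x₀).le
      rw [e4, e0]; ring
    refine Tendsto.congr (fun x₀ => (heq x₀).symm) ?_
    have := (tendsto_const_nhds (x := (∫ t in Ioi (0:ℝ), gg j w b (-(Real.pi/4)) t))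
        (f := atBot (α := ℝ))).sub hT4
    have h2 := this.sub ((tendsto_const_nhds (x := (∫ t in Ioi (0:ℝ), gg j w b 0 t))
        (f := atBot (α := ℝ))).sub hT0)
    simpa using h2
  have := tendsto_nhds_unique hV key
  linear_combination this

lemma gg_zero (j : ℕ) (w b t : ℝ) :
    gg j w b 0 t = (t : ℂ) ^ j *
      Complex.exp (-2 * (Real.pi : ℂ) * (w : ℂ) * (t : ℂ) -
        2 * (Real.pi : ℂ) * Complex.I * (b : ℂ) * (t : ℂ) ^ 2) := by
  simp [gg, FF]

lemma gg_pi4 (j : ℕ) (w b t : ℝ) :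
    gg j w b (-(Real.pi/4)) t
      = Complex.exp (-(Complex.I) * (Real.pi : ℂ) * ((j : ℂ) + 1) / 4) *
        ((t : ℂ) ^ j * Complex.exp (-2 * (Real.pi : ℂ) * (w : ℂ) *
            Complex.exp (-(Complex.I) * (Real.pi : ℂ) / 4) * (t : ℂ) -
          2 * (Real.pi : ℂ) * (b : ℂ) * (t : ℂ) ^ 2)) := by
  have hE : ((↑(-(Real.pi/4)) : ℂ) * Complex.I) = -(Complex.I) * (Real.pi : ℂ) / 4 := by
    push_cast; ring
  set E := Complex.exp (-(Complex.I) * (Real.pi : ℂ) / 4) with hEdef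
  have hj : E ^ j = Complex.exp (-(Complex.I) * (Real.pi : ℂ) * (j : ℂ) / 4) := by
    rw [hEdef, ← Complex.exp_nat_mul]; congr 1; ring
  have hsq : E ^ 2 = -Complex.I := by
    rw [hEdef, ← Complex.exp_nat_mul,
      show ((2:ℕ):ℂ) * (-(Complex.I) * (Real.pi : ℂ) / 4) = (↑(-(Real.pi/2)) : ℂ) * Complex.I by
        push_cast; ring,
      Complex.exp_mul_I, ← Complex.ofReal_cos, ← Complex.ofReal_sin]
    simp [Real.cos_pi_div_two, Real.sin_pi_div_two]
  have hprod : E * E ^ j = Complex.exp (-(Complex.I) * (Real.pi : ℂ) * ((j : ℂ) + 1) / 4) := by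
    rw [hj, hEdef, ← Complex.exp_add]; congr 1; ring
  rw [gg, FF, hE, ← hEdef, mul_pow]
  have hexp : Complex.exp (-2 * (Real.pi : ℂ) * (w : ℂ) * (E * (t : ℂ)) -
      2 * (Real.pi : ℂ) * Complex.I * (b : ℂ) * (E * (t : ℂ)) ^ 2)
      = Complex.exp (-2 * (Real.pi : ℂ) * (w : ℂ) * E * (t : ℂ) -
          2 * (Real.pi : ℂ) * (b : ℂ) * (t : ℂ) ^ 2) := by
    congr 1
    rw [mul_pow, hsq]
    ring_nf
    linear_combination (2 * (Real.pi : ℂ) * (b : ℂ) * (t : ℂ) ^ 2) * Complex.I_sq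
  rw [hexp, ← hprod]
  ring

set_option maxHeartbeats 1000000 in
/-- Rotating the contour from the positive real axis to the ray at angle `−π/4`
and truncating at `K−iK` costs at most `A·e^{−K}`, uniformly. -/
theorem ItC9_approx_ItC7 :
    ∃ A > (0 : ℝ), ∀ K : ℕ, 1 ≤ K → ∀ j : ℕ, j ≤ K →
      ∀ w : ℝ, 0 < w → w ≤ 1 → ∀ b : ℝ, 0 < b → b ≤ 1 → 1 ≤ 2 * b * K →
        ‖ItC9 K j w b - ItC7 K j w b‖ ≤ A * Real.exp (-(K : ℝ)) := by
  refine ⟨1, one_pos, fun K hK j hj w hw hw1 b hb hb1 hbK => ?_⟩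
  have hπ := Real.pi_pos
  have hπ3 := Real.pi_gt_three
  have hs2 : Real.sqrt 2 ^ 2 = 2 := Real.sq_sqrt (by norm_num)
  have hs2' : 1 ≤ Real.sqrt 2 := by nlinarith [Real.sqrt_nonneg 2]
  have hK1 : (1:ℝ) ≤ (K:ℝ) := by exact_mod_cast hK
  set s : ℝ := Real.sqrt 2 * K with hsdef
  have hs0 : 0 ≤ s := by positivity
  have hθ4a : -(Real.pi/4) ≤ -(Real.pi/4) := le_rfl
  have hθ4b : -(Real.pi/4) ≤ (0:ℝ) := by linarith
  -- identify ItC9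
  have h9 : ItC9 K j w b = ((K:ℂ)^j)⁻¹ * ∫ t in Ioi (0:ℝ), gg j w b 0 t := by
    rw [ItC9]
    exact congrArg _ (setIntegral_congr_fun measurableSet_Ioi
      (fun t _ => (gg_zero j w b t).symm))
  -- identify ItC7
  have h7 : ItC7 K j w b = ((K:ℂ)^j)⁻¹ * ∫ t in Ioc (0:ℝ) s, gg j w b (-(Real.pi/4)) t := by
    rw [ItC7, show (∫ t in Ioc (0:ℝ) s, gg j w b (-(Real.pi/4)) t)
        = ∫ t in Ioc (0:ℝ) s, Complex.exp (-(Complex.I) * (Real.pi : ℂ) * ((j : ℂ) + 1) / 4) *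
          ((t : ℂ) ^ j * Complex.exp (-2 * (Real.pi : ℂ) * (w : ℂ) *
              Complex.exp (-(Complex.I) * (Real.pi : ℂ) / 4) * (t : ℂ) -
            2 * (Real.pi : ℂ) * (b : ℂ) * (t : ℂ) ^ 2))
      from setIntegral_congr_fun measurableSet_Ioc (fun t _ => gg_pi4 j w b t),
      MeasureTheory.integral_const_mul, intervalIntegral.integral_of_le hs0]
    ring
  have hsplit := split_Ioi j w b hw hb.le hθ4a hθ4b (a := s) hs0
  have hrot := rot j w b hw hb.le
  have hdiff : ItC9 K j w b - ItC7 K j w b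
      = ((K:ℂ)^j)⁻¹ * ∫ t in Ioi s, gg j w b (-(Real.pi/4)) t := by
    rw [h9, h7, hrot, hsplit]; ring
  -- pointwise bound on the tail
  have hptw : ∀ t ∈ Ioi s, ((K:ℝ)^j)⁻¹ * ‖gg j w b (-(Real.pi/4)) t‖
      ≤ Real.exp (-(K:ℝ)) * Real.exp (-t) := by
    intro t ht
    rw [mem_Ioi] at ht
    have hts : Real.sqrt 2 * K ≤ t := le_of_lt ht
    have ht0 : 0 < t := lt_of_lt_of_le (by nlinarith) hts
    have htK : (K:ℝ) ≤ t := by nlinarith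
    rw [norm_gg j w b _ t ht0.le,
      show 2*(-(Real.pi/4)) = -(Real.pi/2) by ring, Real.sin_neg, Real.sin_pi_div_two,
      Real.cos_neg, Real.cos_pi_div_four]
    have e1 : ((K:ℝ)^j)⁻¹ * t^j = (t/K)^j := by
      rw [div_pow]; field_simp
    have e2 : (t/(K:ℝ))^j ≤ (t/K)^K := by
      apply pow_le_pow_right₀ _ hj
      rw [le_div_iff₀ (by linarith : (0:ℝ) < (K:ℝ))]; linarith
    have e3 : (t/(K:ℝ))^K ≤ Real.exp (t - K) := by
      have h4 : t/(K:ℝ) ≤ Real.exp (t/K - 1) := by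
        have := Real.add_one_le_exp (t/(K:ℝ) - 1); linarith
      calc (t/(K:ℝ))^K ≤ (Real.exp (t/(K:ℝ) - 1))^K := by
            apply pow_le_pow_left₀ (by positivity) h4
        _ = Real.exp (t - K) := by
            rw [← Real.exp_nat_mul]; congr 1; field_simp
    have h2t : 2*t ≤ 2*Real.pi*b*t^2 := by
      have f1 : Real.sqrt 2 * (K:ℝ) * t ≤ t^2 := by nlinarith
      have f2 : 0 ≤ 2*Real.pi*b := by positivity
      have f3 : 2*Real.pi*b*(Real.sqrt 2 * K * t) ≤ 2*Real.pi*b*t^2 :=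
        mul_le_mul_of_nonneg_left f1 f2
      have f4 : Real.sqrt 2 * Real.pi * t ≤ 2*Real.pi*b*(Real.sqrt 2 * K * t) := by
        nlinarith [mul_le_mul_of_nonneg_left hbK
          (by positivity : (0:ℝ) ≤ Real.sqrt 2 * Real.pi * t)]
      have f6 : (2:ℝ) ≤ Real.sqrt 2 * Real.pi := by
        nlinarith [mul_nonneg (by linarith : (0:ℝ) ≤ Real.sqrt 2 - 1)
          (by linarith : (0:ℝ) ≤ Real.pi - 3)]
      have f5 : 2*t ≤ Real.sqrt 2 * Real.pi * t := by
        nlinarith [mul_le_mul_of_nonneg_right f6 ht0.le]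
      linarith
    have hwterm : 0 ≤ 2*Real.pi*w*t*(Real.sqrt 2/2) := by positivity
    calc ((K:ℝ)^j)⁻¹ * (t^j * Real.exp (2*Real.pi*b*t^2*(-1) - 2*Real.pi*w*t*(Real.sqrt 2/2)))
        = (t/K)^j * Real.exp (2*Real.pi*b*t^2*(-1) - 2*Real.pi*w*t*(Real.sqrt 2/2)) := by
          rw [← e1]; ring
      _ ≤ Real.exp (t - K) * Real.exp (2*Real.pi*b*t^2*(-1) - 2*Real.pi*w*t*(Real.sqrt 2/2)) := by
          apply mul_le_mul_of_nonneg_right (le_trans e2 e3) (Real.exp_nonneg _)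
      _ = Real.exp ((t - K) + (2*Real.pi*b*t^2*(-1) - 2*Real.pi*w*t*(Real.sqrt 2/2))) := by
          rw [← Real.exp_add]
      _ ≤ Real.exp (-(K:ℝ) + -t) := by
          apply Real.exp_le_exp.2; linarith
      _ = Real.exp (-(K:ℝ)) * Real.exp (-t) := Real.exp_add _ _
  -- integral estimate
  have int4s : IntegrableOn (gg j w b (-(Real.pi/4))) (Ioi s) :=
    integrableOn_gg j w b hw hb.le hθ4a hθ4b hs0
  have intRHS : IntegrableOn (fun t => Real.exp (-(K:ℝ)) * Real.exp (-t)) (Ioi s) := by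
    have h := exp_neg_integrableOn_Ioi s (one_pos (α := ℝ))
    have h2 := h.congr_fun (fun x _ => by rw [neg_one_mul] :
      ∀ x ∈ Ioi s, Real.exp (-1*x) = Real.exp (-x)) measurableSet_Ioi
    exact h2.const_mul _
  calc ‖ItC9 K j w b - ItC7 K j w b‖
      = ((K:ℝ)^j)⁻¹ * ‖∫ t in Ioi s, gg j w b (-(Real.pi/4)) t‖ := by
        rw [hdiff, norm_mul, norm_inv, norm_pow, Complex.norm_natCast]
    _ ≤ ((K:ℝ)^j)⁻¹ * ∫ t in Ioi s, ‖gg j w b (-(Real.pi/4)) t‖ := by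
        apply mul_le_mul_of_nonneg_left (norm_integral_le_integral_norm _) (by positivity)
    _ = ∫ t in Ioi s, ((K:ℝ)^j)⁻¹ * ‖gg j w b (-(Real.pi/4)) t‖ :=
        (MeasureTheory.integral_const_mul _ _).symm
    _ ≤ ∫ t in Ioi s, Real.exp (-(K:ℝ)) * Real.exp (-t) :=
        setIntegral_mono_on (int4s.norm.const_mul _) intRHS measurableSet_Ioi hptw
    _ = Real.exp (-(K:ℝ)) * ∫ t in Ioi s, Real.exp (-t) :=
        MeasureTheory.integral_const_mul _ _
    _ = Real.exp (-(K:ℝ)) * Real.exp (-s) := by rw [integral_exp_neg_Ioi]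
    _ ≤ 1 * Real.exp (-(K:ℝ)) := by
        nlinarith [Real.exp_pos (-(K:ℝ)), Real.exp_le_one_iff.2 (neg_nonpos.2 hs0),
          Real.exp_pos (-s)]
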